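/- Let (𝔫 = 𝔫₋₁ ⊕ 𝔫₋₂, ⟨·|·⟩) be a pseudo H-type Lie algebra and let α, β be nonzero real numbers. Define a new scalar product ⟨·|·⟩′ on 𝔫 by ⟨x|y⟩′ = α⟨x|y⟩ for x, y ∈ 𝔫₋₁, ⟨z|w⟩′ = β⟨z|w⟩ for z, w ∈ 𝔫₋₂, and ⟨𝔫₋₁|𝔫₋₂⟩′ = 0. Then (𝔫, ⟨·|·⟩′) is a pseudo H-type Lie algebra if and only if α² = β. -/

import Mathlib

/-- The center of a Lie algebra, as a submodule. -/
def ctr (L : Type*) [LieRing L] [LieAlgebra ℝ L] : Submodule ℝ L where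
  carrier := {z | ∀ x : L, ⁅z, x⁆ = 0}
  add_mem' := by
    intro a b ha hb x
    rw [add_lie, ha x, hb x, add_zero]
  zero_mem' := by
    intro x
    exact zero_lie x
  smul_mem' := by
    intro c a ha x
    rw [smul_lie, ha x, smul_zero]

/-- Lemma 2.4: rescaling the scalar product of a pseudo H-type Lie
algebra by α on 𝔫₋₁ and β on 𝔫₋₂ again yields a pseudo H-type Lie algebra if and
only if α² = β. -/
theorem stmt2
    (L : Type*) [LieRing L] [LieAlgebra ℝ L] [FiniteDimensional ℝ L]
    (B : L →ₗ[ℝ] L →ₗ[ℝ] ℝ)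
    (hsymm : ∀ a b : L, B a b = B b a)
    (hnondeg : ∀ a : L, (∀ b : L, B a b = 0) → a = 0)
    (h2step₁ : ∃ a b : L, ⁅a, b⁆ ≠ 0)
    (h2step₂ : ∀ a b c : L, ⁅a, ⁅b, c⁆⁆ = 0)
    (hctrnd : ∀ z ∈ ctr L, (∀ w ∈ ctr L, B z w = 0) → z = 0)
    (n1 : Submodule ℝ L)
    (hn1 : ∀ x : L, x ∈ n1 ↔ ∀ z ∈ ctr L, B x z = 0)
    (J : L → L →ₗ[ℝ] L)
    (hJmap : ∀ z ∈ ctr L, ∀ x ∈ n1, J z x ∈ n1)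
    (hJdef : ∀ z ∈ ctr L, ∀ x ∈ n1, ∀ y ∈ n1, B (J z x) y = B z ⁅x, y⁆)
    (hJsq : ∀ z ∈ ctr L, ∀ x ∈ n1, J z (J z x) = -(B z z) • x)
    (hcompl : IsCompl n1 (ctr L))
    (α β : ℝ) (hα : α ≠ 0) (hβ : β ≠ 0)
    (B' : L →ₗ[ℝ] L →ₗ[ℝ] ℝ)
    (hB'1 : ∀ x ∈ n1, ∀ y ∈ n1, B' x y = α * B x y)
    (hB'2 : ∀ z ∈ ctr L, ∀ w ∈ ctr L, B' z w = β * B z w)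
    (hB'cross : ∀ x ∈ n1, ∀ z ∈ ctr L, B' x z = 0 ∧ B' z x = 0) :
    ((∀ a b : L, B' a b = B' b a) ∧
     (∀ a : L, (∀ b : L, B' a b = 0) → a = 0) ∧
     (∀ z ∈ ctr L, (∀ w ∈ ctr L, B' z w = 0) → z = 0) ∧
     (∀ x : L, x ∈ n1 ↔ ∀ z ∈ ctr L, B' x z = 0) ∧
     (∃ J' : L → L →ₗ[ℝ] L,
       (∀ z ∈ ctr L, ∀ x ∈ n1, J' z x ∈ n1) ∧
       (∀ z ∈ ctr L, ∀ x ∈ n1, ∀ y ∈ n1, B' (J' z x) y = B' z ⁅x, y⁆) ∧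
       (∀ z ∈ ctr L, ∀ x ∈ n1, J' z (J' z x) = -(B' z z) • x))) ↔
    α ^ 2 = β := by
  -- brackets are central
  have hbr : ∀ a b : L, ⁅a, b⁆ ∈ ctr L := by
    intro a b x
    rw [← lie_skew, h2step₂ x a b, neg_zero]
  -- decomposition
  have hdec : ∀ a : L, ∃ x ∈ n1, ∃ z ∈ ctr L, a = x + z := by
    intro a
    obtain ⟨x, z, hx, hz, hxz⟩ := Submodule.codisjoint_iff_exists_add_eq.mp hcompl.codisjoint a
    exact ⟨x, hx, z, hz, hxz.symm⟩
  -- B is nondegenerate on n1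
  have hn1nd : ∀ x ∈ n1, (∀ y ∈ n1, B x y = 0) → x = 0 := by
    intro x hx h
    apply hnondeg
    intro b
    obtain ⟨y, hy, w, hw, rfl⟩ := hdec b
    rw [map_add, h y hy, (hn1 x).1 hx w hw, add_zero]
  -- an anisotropic vector in the center
  have haniso : ∃ z ∈ ctr L, B z z ≠ 0 := by
    by_contra h
    push_neg at h
    obtain ⟨a, b, hab⟩ := h2step₁
    apply hab
    apply hctrnd _ (hbr a b)
    intro w hw
    have h1 := h (⁅a, b⁆ + w) ((ctr L).add_mem (hbr a b) hw)
    have h2 := h ⁅a, b⁆ (hbr a b)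
    have h3 := h w hw
    have h4 := hsymm ⁅a, b⁆ w
    simp only [map_add, LinearMap.add_apply] at h1
    rw [h2, h3] at h1
    linarith
  -- a nonzero vector in n1
  have hx0 : ∃ x ∈ n1, x ≠ (0 : L) := by
    obtain ⟨a, b, hab⟩ := h2step₁
    obtain ⟨x, hx, z, hz, rfl⟩ := hdec a
    refine ⟨x, hx, ?_⟩
    rintro rfl
    apply hab
    rw [zero_add]
    exact hz b
  constructor
  · rintro ⟨hs', hnd', hcnd', hn1', J', hJ'map, hJ'def, hJ'sq⟩
    have key : ∀ z ∈ ctr L, ∀ x ∈ n1, α • J' z x = β • J z x := by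
      intro z hz x hx
      have hmem : α • J' z x - β • J z x ∈ n1 :=
        Submodule.sub_mem _ (Submodule.smul_mem _ _ (hJ'map z hz x hx))
          (Submodule.smul_mem _ _ (hJmap z hz x hx))
      have h0 : α • J' z x - β • J z x = 0 := by
        apply hn1nd _ hmem
        intro y hy
        have e1 : B' (J' z x) y = α * B (J' z x) y := hB'1 _ (hJ'map z hz x hx) y hy
        have e2 : B' (J' z x) y = B' z ⁅x, y⁆ := hJ'def z hz x hx y hy
        have e3 : B' z ⁅x, y⁆ = β * B z ⁅x, y⁆ := hB'2 z hz _ (hbr x y)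
        have e4 : B (J z x) y = B z ⁅x, y⁆ := hJdef z hz x hx y hy
        simp only [map_sub, map_smul, LinearMap.sub_apply, LinearMap.smul_apply,
          smul_eq_mul]
        rw [e4]
        have : α * B (J' z x) y = β * B z ⁅x, y⁆ := by rw [← e1, e2, e3]
        linarith
      exact sub_eq_zero.mp h0
    obtain ⟨z0, hz0, hz0ne⟩ := haniso
    obtain ⟨x0, hx0m, hx0ne⟩ := hx0
    -- compute α^2 • J'z0(J'z0 x0) two ways
    have e2 : α • J' z0 (J z0 x0) = β • J z0 (J z0 x0) :=
      key z0 hz0 _ (hJmap z0 hz0 x0 hx0m)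
    have e3 : (α * α) • (J' z0 (J' z0 x0)) = (β * β) • (J z0 (J z0 x0)) := by
      calc (α * α) • (J' z0 (J' z0 x0))
          = α • J' z0 (α • J' z0 x0) := by rw [map_smul, smul_smul]
        _ = α • J' z0 (β • J z0 x0) := by rw [key z0 hz0 x0 hx0m]
        _ = β • (α • J' z0 (J z0 x0)) := by
            rw [map_smul, smul_smul, smul_smul, mul_comm]
        _ = β • (β • J z0 (J z0 x0)) := by rw [e2]
        _ = (β * β) • (J z0 (J z0 x0)) := by rw [smul_smul]
    rw [hJ'sq z0 hz0 x0 hx0m, hJsq z0 hz0 x0 hx0m,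
      hB'2 z0 hz0 z0 hz0, smul_smul, smul_smul] at e3
    have e4 : (α * α * -(β * B z0 z0) - β * β * -(B z0 z0)) • x0 = 0 := by
      rw [sub_smul, e3, sub_self]
    rcases smul_eq_zero.mp e4 with h | h
    · have : β * (B z0 z0) * (β - α * α) = 0 := by ring_nf; ring_nf at h; linarith
      rcases mul_eq_zero.mp this with h' | h'
      · exact absurd (mul_eq_zero.mp h') (by push_neg; exact ⟨hβ, hz0ne⟩)
      · rw [pow_two]; linarith
    · exact absurd h hx0ne
  · intro hab
    have hco : ∀ x ∈ n1, ∀ z ∈ ctr L, B x z = 0 := fun x hx => (hn1 x).1 hx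
    have hco' : ∀ x ∈ n1, ∀ z ∈ ctr L, B z x = 0 := by
      intro x hx z hz; rw [hsymm]; exact hco x hx z hz
    have hB'full : ∀ x ∈ n1, ∀ z ∈ ctr L, ∀ y ∈ n1, ∀ w ∈ ctr L,
        B' (x + z) (y + w) = α * B x y + β * B z w := by
      intro x hx z hz y hy w hw
      simp only [map_add, LinearMap.add_apply]
      rw [hB'1 x hx y hy, (hB'cross x hx w hw).1, (hB'cross y hy z hz).2,
        hB'2 z hz w hw]
      ring
    refine ⟨?_, ?_, ?_, ?_, fun z => α • J z, ?_, ?_, ?_⟩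
    · intro a b
      obtain ⟨x, hx, z, hz, rfl⟩ := hdec a
      obtain ⟨y, hy, w, hw, rfl⟩ := hdec b
      rw [hB'full x hx z hz y hy w hw, hB'full y hy w hw x hx z hz,
        hsymm x y, hsymm z w]
    · intro a ha
      obtain ⟨x, hx, z, hz, rfl⟩ := hdec a
      have hx0 : x = 0 := by
        apply hn1nd x hx
        intro y hy
        have := ha y
        rw [map_add, LinearMap.add_apply, hB'1 x hx y hy,
          (hB'cross y hy z hz).2] at this
        have : α * B x y = 0 := by linarith
        exact (mul_eq_zero.mp this).resolve_left hα
      have hz0 : z = 0 := by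
        apply hctrnd z hz
        intro w hw
        have := ha w
        rw [map_add, LinearMap.add_apply, (hB'cross x hx w hw).1,
          hB'2 z hz w hw] at this
        have : β * B z w = 0 := by linarith
        exact (mul_eq_zero.mp this).resolve_left hβ
      rw [hx0, hz0, add_zero]
    · intro z hz h
      apply hctrnd z hz
      intro w hw
      have := h w hw
      rw [hB'2 z hz w hw] at this
      exact (mul_eq_zero.mp this).resolve_left hβ
    · intro x
      constructor
      · intro hx z hz
        exact (hB'cross x hx z hz).1
      · intro h
        obtain ⟨x1, hx1, z1, hz1, rfl⟩ := hdec x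
        have hz10 : z1 = 0 := by
          apply hctrnd z1 hz1
          intro w hw
          have := h w hw
          rw [map_add, LinearMap.add_apply, (hB'cross x1 hx1 w hw).1,
            hB'2 z1 hz1 w hw] at this
          have : β * B z1 w = 0 := by linarith
          exact (mul_eq_zero.mp this).resolve_left hβ
        rw [hz10, add_zero]
        exact hx1
    · intro z hz x hx
      simp only [LinearMap.smul_apply]
      exact Submodule.smul_mem _ _ (hJmap z hz x hx)
    · intro z hz x hx y hy
      simp only [LinearMap.smul_apply]
      have hm : α • J z x ∈ n1 := Submodule.smul_mem _ _ (hJmap z hz x hx)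
      rw [hB'1 _ hm y hy, hB'2 z hz _ (hbr x y), ← hJdef z hz x hx y hy, ← hab]
      simp only [map_smul, LinearMap.smul_apply, smul_eq_mul]
      ring
    · intro z hz x hx
      simp only [LinearMap.smul_apply, map_smul]
      rw [hJsq z hz x hx, hB'2 z hz z hz, smul_smul, smul_smul, ← hab]
      congr 1
      ring
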